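/- Let α ∈ ℤ_{≥0}^n be a composition and F a column-strict flagged filling of the skyline diagram D(α) with weight wt(F) = (v_1,…,v_n). If 1 ≤ i < j ≤ n and v_i < v_j, then there exists a column-strict flagged filling F' of D(α) with wt(F') = t_{i,j}(wt(F)). -/

import Mathlib

/-- `R ≤ S` for subsets of `[n]`: they have the same size and for each `k`, the
`k`-th smallest element of `R` is at most the `k`-th smallest element of `S`. -/
def FinsetLe (n : ℕ) (R S : Finset (Fin n)) : Prop :=
  R.card = S.card ∧
    ∀ (k : ℕ) (hR : k < (R.sort (· ≤ ·)).length) (hS : k < (S.sort (· ≤ ·)).length),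
      (R.sort (· ≤ ·)).get ⟨k, hR⟩ ≤ (S.sort (· ≤ ·)).get ⟨k, hS⟩

/-- `C ≤ D` for diagrams (columnwise comparison of the column sets). -/
def DiagramLe (n : ℕ) (C D : Fin n → Finset (Fin n)) : Prop :=
  ∀ j, FinsetLe n (C j) (D j)

/-- The skyline diagram of a composition `α`: column `j` (0-indexed) consists of the
rows `i` with `α i ≥ j + 1`; i.e. row `i` consists of the first `α i` boxes. -/
def skyline (n : ℕ) (α : Fin n → ℕ) : Fin n → Finset (Fin n) :=
  fun j => Finset.univ.filter fun i => (j : ℕ) < α i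

/-- The set `F(D)` of column-strict flagged fillings of the diagram `D`: a filling
assigns to each box `(i, j)` of `D` a value in `Fin n` (the value `v` standing for the
positive integer `v + 1`), the entries in each column are distinct (column-strict), and
the entry in a box in row `i` is at most `i` (flagged). -/
def Fillings (n : ℕ) (D : Fin n → Finset (Fin n)) :
    Set ((j : Fin n) → {i : Fin n // i ∈ D j} → Fin n) :=
  {F | (∀ j, Function.Injective (F j)) ∧
       ∀ (j : Fin n) (i : {i : Fin n // i ∈ D j}), F j i ≤ (i : Fin n)}

/-- The weight of a filling: `wt n D F k` is the number of entries of `F` equal to `k`. -/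
def wt (n : ℕ) (D : Fin n → Finset (Fin n))
    (F : (j : Fin n) → {i : Fin n // i ∈ D j} → Fin n) : Fin n → ℕ :=
  fun k => ∑ j, ((D j).attach.filter fun i => F j i = k).card

/-- If `F` is a column-strict flagged filling of the skyline diagram `D(α)` with weight
`v = wt F`, and `i < j` with `v i < v j`, then there is a column-strict flagged filling
`F'` of `D(α)` with `wt F' = t_{i,j}(wt F)`. -/
theorem exists_filling_transposed_weight (n : ℕ) (hn : 1 ≤ n)
    (α : Fin n → ℕ) (hα : ∀ i, α i ≤ n)
    (F : (j : Fin n) → {i : Fin n // i ∈ skyline n α j} → Fin n)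
    (hF : F ∈ Fillings n (skyline n α))
    (i j : Fin n) (hij : i < j)
    (hv : wt n (skyline n α) F i < wt n (skyline n α) F j) :
    ∃ F' ∈ Fillings n (skyline n α),
      wt n (skyline n α) F' = wt n (skyline n α) F ∘ Equiv.swap i j := by
  obtain ⟨hinj, hflag⟩ := hF
  set cnt : Fin n → Fin n → ℕ :=
    fun k c => ((skyline n α c).attach.filter fun x => F c x = k).card with hcnt
  have cnt_le_one : ∀ k c, cnt k c ≤ 1 := by
    intro k c
    apply Finset.card_le_one.mpr
    intro a ha b hb
    simp only [Finset.mem_filter] at ha hb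
    exact hinj c (ha.2.trans hb.2.symm)
  have hwt : ∀ k, wt n (skyline n α) F k = ∑ c, cnt k c := fun k => rfl
  set A : Finset (Fin n) :=
    Finset.univ.filter (fun c => cnt j c = 1 ∧ cnt i c = 0) with hA
  have hbound : wt n (skyline n α) F j ≤ A.card + wt n (skyline n α) F i := by
    rw [hwt, hwt, ← Finset.sum_sdiff (Finset.subset_univ A)]
    have h1 : ∑ c ∈ A, cnt j c ≤ A.card := by
      calc ∑ c ∈ A, cnt j c ≤ ∑ _c ∈ A, 1 :=
              Finset.sum_le_sum (fun c _ => cnt_le_one j c)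
        _ = A.card := by simp
    have h2 : ∑ c ∈ Finset.univ \ A, cnt j c ≤ ∑ c ∈ Finset.univ \ A, cnt i c := by
      apply Finset.sum_le_sum
      intro c hc
      have hcj := cnt_le_one j c
      have hci := cnt_le_one i c
      have hcA : ¬(cnt j c = 1 ∧ cnt i c = 0) := by
        intro h
        have : c ∈ A := Finset.mem_filter.mpr ⟨Finset.mem_univ c, h⟩
        simp only [Finset.mem_sdiff] at hc
        exact hc.2 this
      omega
    have h3 : ∑ c ∈ Finset.univ \ A, cnt i c ≤ ∑ c, cnt i c :=
      Finset.sum_le_sum_of_subset (Finset.sdiff_subset)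
    omega
  obtain ⟨S, hSA, hScard⟩ :=
    Finset.exists_subset_card_eq (s := A) (n := wt n (skyline n α) F j - wt n (skyline n α) F i) (by omega)
  have hSj : ∀ c ∈ S, cnt j c = 1 :=
    fun c hc => ((Finset.mem_filter.mp (hSA hc)).2).1
  have hSi : ∀ c ∈ S, cnt i c = 0 :=
    fun c hc => ((Finset.mem_filter.mp (hSA hc)).2).2
  have hSnoti : ∀ c ∈ S, ∀ x : {x : Fin n // x ∈ skyline n α c}, F c x ≠ i := by
    intro c hc x hx
    have h0 := Finset.card_eq_zero.mp (hSi c hc)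
    have hxmem : x ∈ (skyline n α c).attach.filter (fun x => F c x = i) :=
      Finset.mem_filter.mpr ⟨Finset.mem_attach _ _, hx⟩
    rw [h0] at hxmem
    exact absurd hxmem (Finset.notMem_empty x)
  set F' : (c : Fin n) → {x : Fin n // x ∈ skyline n α c} → Fin n :=
    fun c x => if c ∈ S ∧ F c x = j then i else F c x with hF'
  have hij' : i ≠ j := Fin.ne_of_lt hij
  -- filter descriptions
  have hfi : ∀ c ∈ S,
      ((skyline n α c).attach.filter fun x => F' c x = i)
        = ((skyline n α c).attach.filter fun x => F c x = j) := by
    intro c hc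
    ext x
    simp only [Finset.mem_filter, Finset.mem_attach, true_and, hF']
    by_cases h : F c x = j
    · simp [h, hc]
    · simp [h, hc, hSnoti c hc x]
  have hfj : ∀ c ∈ S, ((skyline n α c).attach.filter fun x => F' c x = j) = ∅ := by
    intro c hc
    rw [Finset.eq_empty_iff_forall_notMem]
    intro x hx
    simp only [Finset.mem_filter, hF'] at hx
    by_cases h : F c x = j
    · rw [if_pos ⟨hc, h⟩] at hx; exact hij' hx.2
    · rw [if_neg (fun hh => h hh.2)] at hx; exact h hx.2
  have hFeq : ∀ c, c ∉ S → ∀ x, F' c x = F c x := by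
    intro c hc x
    simp only [hF']
    exact if_neg (fun hh => hc hh.1)
  have hfk : ∀ (k : Fin n), k ≠ i → k ≠ j → ∀ c,
      ((skyline n α c).attach.filter fun x => F' c x = k)
        = ((skyline n α c).attach.filter fun x => F c x = k) := by
    intro k hki hkj c
    ext x
    simp only [Finset.mem_filter, Finset.mem_attach, true_and, hF']
    split_ifs with h
    · rw [h.2]
      constructor
      · intro hh; exact absurd hh.symm hki
      · intro hh; exact absurd hh.symm hkj
    · exact Iff.rfl
  refine ⟨F', ⟨?_, ?_⟩, ?_⟩
  · -- column-strict
    intro c x y hxy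
    by_cases hc : c ∈ S
    · simp only [hF'] at hxy
      by_cases hx : F c x = j <;> by_cases hy : F c y = j
      · exact hinj c (hx.trans hy.symm)
      · rw [if_pos ⟨hc, hx⟩, if_neg (fun hh => hy hh.2)] at hxy
        exact absurd hxy.symm (hSnoti c hc y)
      · rw [if_neg (fun hh => hx hh.2), if_pos ⟨hc, hy⟩] at hxy
        exact absurd hxy (hSnoti c hc x)
      · rw [if_neg (fun hh => hx hh.2), if_neg (fun hh => hy hh.2)] at hxy
        exact hinj c hxy
    · rw [hFeq c hc x, hFeq c hc y] at hxy
      exact hinj c hxy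
  · -- flagged
    intro c x
    simp only [hF']
    split_ifs with h
    · exact le_trans hij.le (h.2 ▸ hflag c x)
    · exact hflag c x
  · -- weight
    funext k
    simp only [Function.comp_apply]
    by_cases hki : k = i
    · rw [hki, Equiv.swap_apply_left]
      show ∑ c, ((skyline n α c).attach.filter fun x => F' c x = i).card = wt n (skyline n α) F j
      rw [← Finset.sum_sdiff (Finset.subset_univ S)]
      have e1 : ∑ c ∈ Finset.univ \ S, ((skyline n α c).attach.filter fun x => F' c x = i).card
          = ∑ c ∈ Finset.univ \ S, cnt i c := by
        apply Finset.sum_congr rfl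
        intro c hc
        simp only [Finset.mem_sdiff] at hc
        congr 1
        ext x
        simp [hFeq c hc.2 x]
      have e2 : ∑ c ∈ S, ((skyline n α c).attach.filter fun x => F' c x = i).card
          = ∑ c ∈ S, cnt j c := by
        apply Finset.sum_congr rfl
        intro c hc
        rw [hfi c hc]
      have e3 : ∑ c ∈ S, cnt j c = S.card := by
        rw [Finset.sum_congr rfl (fun c hc => hSj c hc)]
        simp
      have e4 : ∑ c ∈ S, cnt i c = 0 :=
        Finset.sum_eq_zero (fun c hc => hSi c hc)
      have e5 : (∑ c ∈ Finset.univ \ S, cnt i c) + ∑ c ∈ S, cnt i c = wt n (skyline n α) F i :=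
        by rw [hwt]; exact Finset.sum_sdiff (Finset.subset_univ S)
      have e6 : (∑ c ∈ Finset.univ \ S, cnt j c) + ∑ c ∈ S, cnt j c = wt n (skyline n α) F j :=
        by rw [hwt]; exact Finset.sum_sdiff (Finset.subset_univ S)
      rw [e1, e2, e3]
      omega
    · by_cases hkj : k = j
      · rw [hkj, Equiv.swap_apply_right]
        show ∑ c, ((skyline n α c).attach.filter fun x => F' c x = j).card = wt n (skyline n α) F i
        rw [← Finset.sum_sdiff (Finset.subset_univ S)]
        have e1 : ∑ c ∈ Finset.univ \ S, ((skyline n α c).attach.filter fun x => F' c x = j).card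
            = ∑ c ∈ Finset.univ \ S, cnt j c := by
          apply Finset.sum_congr rfl
          intro c hc
          simp only [Finset.mem_sdiff] at hc
          congr 1
          ext x
          simp [hFeq c hc.2 x]
        have e2 : ∑ c ∈ S, ((skyline n α c).attach.filter fun x => F' c x = j).card = 0 := by
          apply Finset.sum_eq_zero
          intro c hc
          rw [hfj c hc]
          simp
        have e3 : ∑ c ∈ S, cnt j c = S.card := by
          rw [Finset.sum_congr rfl (fun c hc => hSj c hc)]
          simp
        have e5 : (∑ c ∈ Finset.univ \ S, cnt j c) + ∑ c ∈ S, cnt j c = wt n (skyline n α) F j :=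
          by rw [hwt]; exact Finset.sum_sdiff (Finset.subset_univ S)
        rw [e1, e2]
        omega
      · rw [Equiv.swap_apply_of_ne_of_ne hki hkj]
        show ∑ c, ((skyline n α c).attach.filter fun x => F' c x = k).card = wt n (skyline n α) F k
        rw [hwt]
        exact Finset.sum_congr rfl (fun c _ => by rw [hfk k hki hkj c])
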